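/- Let V_Y, V_X ∈ St_c(ℝⁿ) with n > c, and let Z ∈ ℝ^{2c×n} be the vertical stacking of V_Yᵀ and V_Xᵀ. Then the multiset of singular values of Z is ⋃_{i=1}^{c} { √(1 + σ_i(V_Yᵀ V_X)), √(1 − σ_i(V_Yᵀ V_X)) }, where σ_i(V_Yᵀ V_X) are the singular values of the c×c matrix V_Yᵀ V_X. -/

import Mathlib

open Matrix

section Aux

open Polynomial

variable {k : Type*} [Fintype k] [DecidableEq k]

private lemma charpoly_conj_aux {R : Type*} [CommRing R] (U D V : Matrix k k R)
    (hUV : U * V = 1) : (U * D * V).charpoly = D.charpoly := by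
  have h1 : (U.map C).det * (V.map C).det = 1 := by
    rw [← det_mul, ← Matrix.map_mul, hUV, Matrix.map_one _ (map_zero C) (map_one C), det_one]
  have key : charmatrix (U * D * V) = U.map C * charmatrix D * V.map C := by
    rw [charmatrix, charmatrix, RingHom.mapMatrix_apply, RingHom.mapMatrix_apply,
      Matrix.mul_sub, Matrix.sub_mul]
    congr 1
    · rw [scalar_apply, ← smul_one_eq_diagonal, mul_smul_comm, mul_one, smul_mul_assoc,
        ← Matrix.map_mul, hUV, Matrix.map_one _ (map_zero C) (map_one C)]
    · rw [← Matrix.map_mul, ← Matrix.map_mul]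
  rw [Matrix.charpoly, Matrix.charpoly, key, det_mul, det_mul, mul_right_comm, h1, one_mul]

private lemma charpoly_diagonal_aux {R : Type*} [CommRing R] (d : k → R) :
    (diagonal d).charpoly = ∏ i, (X - C (d i)) := by
  have : charmatrix (diagonal d) = diagonal (fun i => X - C (d i)) := by
    rw [charmatrix, RingHom.mapMatrix_apply, scalar_apply, diagonal_map (map_zero C),
      diagonal_sub]
  rw [Matrix.charpoly, this, det_diagonal]

private lemma charpoly_hermitian_aux {M : Matrix k k ℝ} (hM : M.IsHermitian) :
    M.charpoly = ∏ i, (X - C (hM.eigenvalues i)) := by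
  have hU := (Matrix.mem_unitaryGroup_iff).mp (hM.eigenvectorUnitary).2
  conv_lhs => rw [hM.spectral_theorem, Unitary.conjStarAlgAut_apply]
  rw [charpoly_conj_aux _ _ _ hU, charpoly_diagonal_aux]
  simp

private lemma eval₂_charpoly_aux {S : Type*} [CommRing S] (f : ℝ →+* S) (q : S)
    (M : Matrix k k ℝ) :
    Polynomial.eval₂ f q M.charpoly = det (q • (1 : Matrix k k S) - M.map f) := by
  have := RingHom.map_det (eval₂RingHom f q) (charmatrix M)
  rw [Matrix.charpoly, ← coe_eval₂RingHom, this]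
  congr 1
  ext i j
  rcases eq_or_ne i j with rfl | h
  · simp [charmatrix_apply, Matrix.one_apply, diagonal]
  · simp [charmatrix_apply, Matrix.one_apply, diagonal, h]

private lemma det_fromBlocks_smul_one_field {F : Type*} [Field F] {p : F} (hp : p ≠ 0)
    (Q R' : Matrix k k F) :
    det (fromBlocks (p • 1) Q R' (p • 1)) = det (p ^ 2 • (1 : Matrix k k F) - R' * Q) := by
  haveI : Invertible (p • (1 : Matrix k k F)) :=
    ⟨p⁻¹ • 1, by rw [smul_mul_assoc, one_mul, smul_smul, inv_mul_cancel₀ hp, one_smul],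
      by rw [smul_mul_assoc, one_mul, smul_smul, mul_inv_cancel₀ hp, one_smul]⟩
  have hinv : ⅟(p • (1 : Matrix k k F)) = p⁻¹ • (1 : Matrix k k F) :=
    invOf_eq_right_inv (by rw [smul_mul_assoc, one_mul, smul_smul, mul_inv_cancel₀ hp, one_smul])
  rw [det_fromBlocks₁₁, hinv, det_smul, det_one, mul_one, mul_smul_comm, Matrix.mul_one,
    smul_mul_assoc, ← det_smul, smul_sub, smul_smul, smul_smul, ← sq,
    mul_inv_cancel₀ hp, one_smul]

private lemma charmatrix_fromBlocks_one {R : Type*} [CommRing R] (M N : Matrix k k R) :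
    charmatrix (fromBlocks (1 : Matrix k k R) M N (1 : Matrix k k R)) =
      fromBlocks (((X - C 1 : R[X])) • 1) ((-M).map C) ((-N).map C)
        (((X - C 1 : R[X])) • 1) := by
  ext (i | i) (j | j) <;>
    simp [charmatrix_apply, diagonal, Matrix.one_apply,
      Matrix.smul_apply, apply_ite (Polynomial.C)]
  · split_ifs with h <;> simp
  · split_ifs with h <;> simp

private lemma det_fromBlocks_poly {p : ℝ[X]} (hp : p ≠ 0) (M N : Matrix k k ℝ) :
    det (fromBlocks (p • 1) ((-M).map C) ((-N).map C) (p • 1)) =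
      det (p ^ 2 • (1 : Matrix k k ℝ[X]) - (N * M).map C) := by
  set K := FractionRing ℝ[X]
  have hinj := IsFractionRing.injective ℝ[X] K
  apply hinj
  set φ : ℝ[X] →+* K := (algebraMap ℝ[X] K : ℝ[X] →+* K) with hφ
  have hφp : φ p ≠ 0 := (map_ne_zero_iff φ hinj).mpr hp
  have h2 : ∀ q : ℝ[X], ((q • (1 : Matrix k k ℝ[X])).map φ) = φ q • 1 := by
    intro q; ext i j
    simp [Matrix.smul_apply, smul_eq_mul, Matrix.one_apply, apply_ite φ]
  have h1 : ∀ (A : Matrix k k ℝ), ((A.map (C : ℝ →+* ℝ[X]) : Matrix k k ℝ[X]).map φ)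
      = A.map (φ.comp (C : ℝ →+* ℝ[X])) := by
    intro A; rw [Matrix.map_map]; rfl
  rw [RingHom.map_det, RingHom.map_det, RingHom.mapMatrix_apply, RingHom.mapMatrix_apply,
    fromBlocks_map, h2, h1, h1, det_fromBlocks_smul_one_field hφp]
  congr 1
  have h3 : ((-N).map (φ.comp (C : ℝ →+* ℝ[X]))) * ((-M).map (φ.comp (C : ℝ →+* ℝ[X])))
      = (N * M).map (φ.comp (C : ℝ →+* ℝ[X])) := by
    rw [← Matrix.map_mul, neg_mul_neg]
  rw [h3]
  ext i j
  simp [Matrix.sub_apply, Matrix.smul_apply, smul_eq_mul, Matrix.one_apply, apply_ite φ,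
    map_pow, Matrix.map_apply, ← Matrix.map_mul]

private lemma factor_aux {μ : ℝ} (hμ : 0 ≤ μ) :
    ((X - C 1 : ℝ[X]) ^ 2 - C μ) =
      (X - C (1 + Real.sqrt μ)) * (X - C (1 - Real.sqrt μ)) := by
  have h : C μ = C (Real.sqrt μ) * C (Real.sqrt μ) := by
    rw [← _root_.map_mul, Real.mul_self_sqrt hμ]
  rw [h, map_add, map_sub]
  ring

private lemma isHermitian_transpose_mul_self_aux {m n : Type*} [Fintype m]
    (A : Matrix m n ℝ) : (Aᵀ * A).IsHermitian := by
  simp [Matrix.IsHermitian, Matrix.conjTranspose_eq_transpose_of_trivial, Matrix.transpose_mul]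

end Aux

/-- The singular values of a real matrix, indexed by rows: the square roots of the
eigenvalues of `A * Aᴴ`. -/
noncomputable def singValsRow {m n : Type*} [Fintype m] [Fintype n] [DecidableEq m]
    (A : Matrix m n ℝ) : m → ℝ :=
  fun i => Real.sqrt ((Matrix.isHermitian_mul_conjTranspose_self A).eigenvalues i)

/-- The singular values of a real matrix, indexed by columns: the square roots of
the eigenvalues of `Aᴴ * A`. -/
noncomputable def singVals {m n : Type*} [Fintype m] [Fintype n] [DecidableEq n]
    (A : Matrix m n ℝ) : n → ℝ :=
  fun i => Real.sqrt ((show (Aᵀ * A).IsHermitian by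
    simp [Matrix.IsHermitian, Matrix.conjTranspose_eq_transpose_of_trivial, Matrix.transpose_mul]).eigenvalues i)

/-- For `V_Y, V_X ∈ St_c(ℝⁿ)` with `n > c`, the multiset of
singular values of the stacked matrix `Z = [V_Yᵀ ; V_Xᵀ] ∈ ℝ^{2c×n}` is
`⋃ᵢ { √(1 + σᵢ(V_YᵀV_X)), √(1 − σᵢ(V_YᵀV_X)) }`. -/
theorem singular_values_stacked_stiefel
    {c n : ℕ} (hcn : c < n)
    (VY VX : Matrix (Fin n) (Fin c) ℝ)
    (hVY : VYᵀ * VY = 1) (hVX : VXᵀ * VX = 1) :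
    Multiset.map (singValsRow (fromRows VYᵀ VXᵀ)) Finset.univ.val =
      Multiset.map (fun i => Real.sqrt (1 + singVals (VYᵀ * VX) i))
          Finset.univ.val +
        Multiset.map (fun i => Real.sqrt (1 - singVals (VYᵀ * VX) i))
          Finset.univ.val := by
  classical
  open Polynomial in
  set B : Matrix (Fin c) (Fin c) ℝ := VYᵀ * VX with hB
  set Z : Matrix (Fin c ⊕ Fin c) (Fin n) ℝ := fromRows VYᵀ VXᵀ with hZdef
  have hBt : Bᴴ = Bᵀ := conjTranspose_eq_transpose_of_trivial _
  have hZZ : Z * Zᴴ = fromBlocks 1 B Bᵀ 1 := by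
    have hBT : VXᵀ * VY = Bᵀ := by rw [hB, transpose_mul, transpose_transpose]
    rw [conjTranspose_eq_transpose_of_trivial, hZdef, transpose_fromRows, transpose_transpose,
      transpose_transpose, fromRows_mul_fromCols, hVY, hVX, hBT]
  have hμ : ∀ i, 0 ≤ (Matrix.isHermitian_conjTranspose_mul_self B).eigenvalues i :=
    eigenvalues_conjTranspose_mul_self_nonneg B
  have hσ : ∀ i, singVals B i
      = Real.sqrt ((Matrix.isHermitian_conjTranspose_mul_self B).eigenvalues i) := fun _ => rfl
  -- the characteristic polynomial of `Z * Zᴴ`, computed two ways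
  have hcp : (Z * Zᴴ).charpoly
      = ∏ i : Fin c, ((X - C (1 + singVals B i)) * (X - C (1 - singVals B i))) := by
    have hp : (X - C 1 : ℝ[X]) ≠ 0 := Polynomial.X_sub_C_ne_zero 1
    rw [hZZ, Matrix.charpoly, charmatrix_fromBlocks_one, det_fromBlocks_poly hp, ← hBt,
      ← eval₂_charpoly_aux, charpoly_hermitian_aux (Matrix.isHermitian_conjTranspose_mul_self B),
      ← Polynomial.coe_eval₂RingHom, map_prod]
    refine Finset.prod_congr rfl fun i _ => ?_
    rw [map_sub, Polynomial.coe_eval₂RingHom, Polynomial.eval₂_X, Polynomial.eval₂_C,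
      hσ i, ← factor_aux (hμ i)]
  have hcp2 : (Z * Zᴴ).charpoly
      = ∏ j : Fin c ⊕ Fin c,
          (X - C ((Matrix.isHermitian_mul_conjTranspose_self Z).eigenvalues j)) :=
    charpoly_hermitian_aux _
  -- compare roots
  have hroots : Multiset.map (Matrix.isHermitian_mul_conjTranspose_self Z).eigenvalues
        Finset.univ.val
      = Multiset.map (fun i => 1 + singVals B i) Finset.univ.val +
        Multiset.map (fun i => 1 - singVals B i) Finset.univ.val := by
    have e1 : ((Multiset.map (Matrix.isHermitian_mul_conjTranspose_self Z).eigenvalues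
        Finset.univ.val).map (fun a => X - C a)).prod = (Z * Zᴴ).charpoly := by
      rw [hcp2, Finset.prod_eq_multiset_prod, Multiset.map_map]
      rfl
    have e2 : (((Multiset.map (fun i => 1 + singVals B i) Finset.univ.val +
        Multiset.map (fun i => 1 - singVals B i) Finset.univ.val).map
          (fun a => X - C a)).prod) = (Z * Zᴴ).charpoly := by
      rw [hcp, Finset.prod_mul_distrib, Finset.prod_eq_multiset_prod,
        Finset.prod_eq_multiset_prod, Multiset.map_add, Multiset.prod_add,
        Multiset.map_map, Multiset.map_map]
      rfl
    have := congrArg Polynomial.roots (e1.trans e2.symm)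
    rwa [Polynomial.roots_multiset_prod_X_sub_C, Polynomial.roots_multiset_prod_X_sub_C] at this
  have : Multiset.map (singValsRow Z) Finset.univ.val
      = Multiset.map Real.sqrt
          (Multiset.map (Matrix.isHermitian_mul_conjTranspose_self Z).eigenvalues
            Finset.univ.val) := by
    rw [Multiset.map_map]; rfl
  rw [this, hroots, Multiset.map_add, Multiset.map_map, Multiset.map_map]
  rfl
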